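/- Let n ≥ 2 be an integer, ε ∈ (0,1), and let r ∈ C²([0,∞)) satisfy the regularized equation r''(t)/(1 − r'(t)²) + ((n−1)/(t+ε))·r'(t) = 1 on [0,∞) with |r'(t)| < 1 for all t, r(0) = 0, and r'(0) = ε/n. Then for every R > 0 there exists a constant C(R) ∈ (0,1), independent of ε, such that |r'(t)| < 1 − C(R) for all t ∈ [0,R). -/

import Mathlib

open Set Filter Topology

/-- If `f 0 < 0` and at every positive zero of `f` (within `Ici 0`) the derivative is
negative, then `f` never reaches `0` on `Ici 0`. -/
lemma no_cross_aux (f f' : ℝ → ℝ)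
    (hf : ∀ t ∈ Set.Ici (0:ℝ), HasDerivWithinAt f (f' t) (Set.Ici 0) t)
    (h0 : f 0 < 0)
    (key : ∀ s, 0 < s → f s = 0 → f' s < 0) :
    ∀ t ∈ Set.Ici (0:ℝ), f t < 0 := by
  intro t ht
  by_contra hcon
  push_neg at hcon
  have hcont : ContinuousOn f (Set.Ici 0) := fun u hu => (hf u hu).continuousWithinAt
  set S : Set ℝ := {u | u ∈ Set.Icc (0:ℝ) t ∧ 0 ≤ f u} with hS
  have hSclosed : IsClosed S := by
    have : S = Set.Icc (0:ℝ) t ∩ f ⁻¹' Set.Ici 0 := by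
      ext u; simp [hS, Set.mem_Icc, and_assoc]
    rw [this]
    exact ContinuousOn.preimage_isClosed_of_isClosed
      (hcont.mono (fun u hu => hu.1)) isClosed_Icc isClosed_Ici
  have hne : S.Nonempty := ⟨t, ⟨ht, le_refl t⟩, hcon⟩
  have hbdd : BddBelow S := ⟨0, fun u hu => hu.1.1⟩
  set s := sInf S with hs
  have hsmem : s ∈ S := hSclosed.csInf_mem hne hbdd
  obtain ⟨⟨hs0, hst⟩, hfs⟩ := hsmem
  have hspos : 0 < s := by
    rcases lt_or_eq_of_le hs0 with h | h
    · exact h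
    · exfalso; rw [← h] at hfs; linarith
  have hbefore : ∀ u ∈ Set.Ico (0:ℝ) s, f u < 0 := by
    intro u ⟨hu0, hus⟩
    by_contra hcc
    push_neg at hcc
    have : u ∈ S := ⟨⟨hu0, hus.le.trans hst⟩, hcc⟩
    exact absurd (csInf_le hbdd this) (not_le.mpr hus)
  have hclosure : s ∈ closure (Set.Ico (0:ℝ) s) := by
    rw [closure_Ico hspos.ne]
    exact ⟨hs0, le_refl s⟩
  haveI hNB : (𝓝[Set.Ico (0:ℝ) s] s).NeBot := mem_closure_iff_nhdsWithin_neBot.mp hclosure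
  have hfs0 : f s = 0 := by
    refine le_antisymm ?_ hfs
    have htend : Tendsto f (𝓝[Set.Ico (0:ℝ) s] s) (𝓝 (f s)) :=
      (hcont s hs0).mono_left (nhdsWithin_mono s (fun u hu => hu.1))
    exact le_of_tendsto htend (eventually_nhdsWithin_of_forall
      (fun u hu => (hbefore u hu).le))
  have hkey := key s hspos hfs0
  -- slope argument : derivative at s is ≥ 0
  have hslope : Tendsto (slope f s) (𝓝[Set.Ico (0:ℝ) s] s) (𝓝 (f' s)) := by
    have := hasDerivWithinAt_iff_tendsto_slope.mp (hf s hs0)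
    refine this.mono_left (nhdsWithin_mono s ?_)
    intro u ⟨hu0, hus⟩
    exact ⟨hu0, by simp [ne_of_lt hus]⟩
  have : 0 ≤ f' s := by
    refine ge_of_tendsto hslope (eventually_nhdsWithin_of_forall ?_)
    intro u ⟨hu0, hus⟩
    have h1 : f u < 0 := hbefore u ⟨hu0, hus⟩
    have h2 : u - s < 0 := by linarith
    rw [slope_def_field]
    exact div_nonneg_of_nonpos (by linarith) (by linarith)
  linarith

theorem stmt_6 (n : ℕ) (hn : 2 ≤ n) :
    ∀ R > (0:ℝ), ∃ C ∈ Set.Ioo (0:ℝ) 1,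
      ∀ ε ∈ Set.Ioo (0:ℝ) 1, ∀ r r' r'' : ℝ → ℝ,
        (∀ t ∈ Set.Ici (0:ℝ), HasDerivWithinAt r (r' t) (Set.Ici 0) t) →
        (∀ t ∈ Set.Ici (0:ℝ), HasDerivWithinAt r' (r'' t) (Set.Ici 0) t) →
        ContinuousOn r'' (Set.Ici 0) →
        (∀ t ∈ Set.Ici (0:ℝ),
          r'' t / (1 - (r' t) ^ 2) + ((n : ℝ) - 1) / (t + ε) * r' t = 1) →
        (∀ t ∈ Set.Ici (0:ℝ), |r' t| < 1) →
        r 0 = 0 → r' 0 = ε / n →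
        ∀ t ∈ Set.Ico (0:ℝ) R, |r' t| < 1 - C := by
  intro R hR
  refine ⟨Real.exp (-2*R)/2, ⟨by positivity, ?_⟩, ?_⟩
  · have h1 : Real.exp (-2*R) < 1 := Real.exp_lt_one_iff.mpr (by linarith)
    linarith
  intro ε hε r r' r'' hd1 hd2 hr''c heq habs hr0 hr0'
  obtain ⟨hε0, hε1⟩ := hε
  have hn2 : (2:ℝ) ≤ (n:ℝ) := by exact_mod_cast hn
  -- Step 1 : r' > 0 on Ici 0
  have hpos : ∀ t ∈ Set.Ici (0:ℝ), 0 < r' t := by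
    have := no_cross_aux (fun u => -(r' u)) (fun u => -(r'' u))
      (fun u hu => (hd2 u hu).neg)
      (by simp only [hr0']
          have hn0 : (0:ℝ) < n := by linarith
          have := div_pos hε0 hn0
          linarith)
      ?_
    · intro t ht; have := this t ht; simpa using this
    · intro s hs hfs
      have hs' : r' s = 0 := by linarith [neg_eq_zero.mp hfs]
      have h2 := heq s hs.le
      rw [hs'] at h2
      simp at h2
      simp only [neg_lt_zero]
      linarith
  -- Step 2 : r' t < 1 - exp(-2t)/2 on Ici 0
  have hub : ∀ t ∈ Set.Ici (0:ℝ), r' t - (1 - Real.exp (-2*t)/2) < 0 := by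
    have hy : ∀ t : ℝ, HasDerivAt (fun u => 1 - Real.exp (-2*u)/2) (Real.exp (-2*t)) t := by
      intro t
      have h1 : HasDerivAt (fun u : ℝ => -2*u) (-2) t := by
        simpa using (hasDerivAt_id t).const_mul (-2:ℝ)
      have h2 := (Real.hasDerivAt_exp (-2*t)).comp t h1
      have h3 := (h2.div_const 2).const_sub 1
      exact h3.congr_deriv (by ring)
    refine no_cross_aux _ (fun u => r'' u - Real.exp (-2*u))
      (fun u hu => (hd2 u hu).sub ((hy u).hasDerivWithinAt)) ?_ ?_
    · have h1 : ε / n < 1/2 := by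
        rw [div_lt_iff₀ (by linarith)]
        nlinarith
      simp only [hr0', mul_zero, Real.exp_zero]
      norm_num
      linarith
    · intro s hs hfs
      set u := Real.exp (-2*s) with hu
      have hupos : 0 < u := Real.exp_pos _
      have hrs : r' s = 1 - u/2 := by linarith
      have hD : 0 < 1 - (r' s)^2 := by
        have h1 := habs s hs.le
        nlinarith [abs_nonneg (r' s), sq_abs (r' s), le_abs_self (r' s), neg_abs_le (r' s)]
      have hk : 0 < ((n:ℝ)-1)/(s+ε) := by
        apply div_pos <;> linarith
      have hr'pos : 0 < r' s := hpos s hs.le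
      have h2 := heq s hs.le
      have h3 : r'' s = (1 - (r' s)^2) * (1 - ((n:ℝ)-1)/(s+ε) * r' s) := by
        have h4 : r'' s / (1 - (r' s)^2) = 1 - ((n:ℝ)-1)/(s+ε) * r' s := by linarith
        rw [div_eq_iff hD.ne'] at h4
        linarith [h4]
      have h5 : 0 < (1 - (r' s)^2) * (((n:ℝ)-1)/(s+ε) * r' s) :=
        mul_pos hD (mul_pos hk hr'pos)
      have hDe : 1 - (r' s)^2 = u - u^2/4 := by rw [hrs]; ring
      have h6 : r'' s = (1 - (r' s)^2) - (1 - (r' s)^2) * (((n:ℝ)-1)/(s+ε) * r' s) := by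
        rw [h3]; ring
      have h7 : u^2/4 ≥ 0 := by positivity
      show r'' s - Real.exp (-2*s) < 0
      rw [← hu]
      linarith
  intro t ⟨ht0, htR⟩
  have hp := hpos t ht0
  have hu := hub t ht0
  rw [abs_of_pos hp]
  have hexp : Real.exp (-2*R) ≤ Real.exp (-2*t) := Real.exp_le_exp.mpr (by linarith)
  linarith
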